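/- Let G₁ and G₂ be torsion-free groups and G = G₁ * G₂ their free product. If g is a non-trivial element of G and there exists a positive integer k such that g^k belongs to (the canonical copy of) G₁, then g belongs to G₁. -/

import Mathlib

open scoped Monoid.Coprod
/-- Old Mathlib's `Monoid.IsTorsionFree` (removed), restored with its old definition. -/
def Monoid.IsTorsionFree (G : Type*) [Monoid G] : Prop :=
  ∀ g : G, g ≠ 1 → ¬IsOfFinOrder g

namespace FPAux

open Monoid Monoid.CoprodI

variable {ι : Type*} {G : ι → Type*} [∀ i, Group (G i)]

/-- Product of a list of letters in the free product. -/
def lprod (L : List (Σ i, G i)) : CoprodI G :=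
  (L.map fun p => of p.2).prod

lemma lprod_nil : lprod ([] : List (Σ i, G i)) = 1 := rfl

lemma lprod_append (L₁ L₂ : List (Σ i, G i)) :
    lprod (L₁ ++ L₂) = lprod L₁ * lprod L₂ := by
  simp [lprod]

lemma lprod_cons (p : (Σ i, G i)) (L : List (Σ i, G i)) :
    lprod (p :: L) = of p.2 * lprod L := by
  simp [lprod]

lemma lprod_singleton {i : ι} (x : G i) : lprod [⟨i, x⟩] = of x := by
  simp [lprod]

/-- Reversed list of inverses. -/
def rinv (L : List (Σ i, G i)) : List (Σ i, G i) :=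
  (L.map fun p => ⟨p.1, p.2⁻¹⟩).reverse

lemma rinv_cons (p : (Σ i, G i)) (L : List (Σ i, G i)) :
    rinv (p :: L) = rinv L ++ [⟨p.1, p.2⁻¹⟩] := by
  simp [rinv]

lemma lprod_rinv (L : List (Σ i, G i)) : lprod (rinv L) = (lprod L)⁻¹ := by
  induction L with
  | nil => simp [rinv, lprod_nil]
  | cons p L ih =>
    rw [rinv_cons, lprod_append, ih, lprod_cons]
    simp [lprod, mul_inv_rev]

lemma word_prod_eq (w : Word G) : w.prod = lprod w.toList := rfl

lemma word_prod_injective : Function.Injective (Word.prod : Word G → CoprodI G) := by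
  classical
  intro w₁ w₂ h
  exact (Word.equiv (M := G)).symm.injective h

/-- singleton word -/
def single (i : ι) (x : G i) (hx : x ≠ 1) : Word G :=
  ⟨[⟨i, x⟩], by simpa using hx, List.isChain_singleton _⟩

lemma single_prod (i : ι) (x : G i) (hx : x ≠ 1) : (single i x hx).prod = of x := by
  simp [single, word_prod_eq, lprod_singleton]

lemma word_of_prod_one (w : Word G) (h : w.prod = 1) : w = Word.empty :=
  word_prod_injective (by rw [h, Word.prod_empty])

lemma word_of_prod_of {i : ι} {x : G i} (hx : x ≠ 1) (w : Word G)
    (h : w.prod = of x) : w = single i x hx :=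
  word_prod_injective (by rw [h, single_prod])

lemma of_ne_one {i : ι} {x : G i} (hx : x ≠ 1) : (of x : CoprodI G) ≠ 1 := by
  intro h
  have := word_of_prod_one (single i x hx) (by rw [single_prod]; exact h)
  simpa [single, Word.empty] using congrArg Word.toList this

lemma index_eq_of_of_eq {i j : ι} {x : G i} {y : G j} (hx : x ≠ 1)
    (h : (of x : CoprodI G) = of y) : i = j := by
  have hy : y ≠ 1 := by
    rintro rfl
    exact of_ne_one hx (by simpa using h)
  have := word_of_prod_of hy (single i x hx) (by rw [single_prod, h])
  have hl := congrArg Word.toList this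
  simp only [single, List.cons.injEq, and_true] at hl
  exact congrArg Sigma.fst hl


lemma conj_pow_aux {H : Type*} [Group H] (u c : H) (k : ℕ) :
    (u * c * u⁻¹) ^ k = u * c ^ k * u⁻¹ := by
  induction k with
  | zero => simp
  | succ k ih => rw [pow_succ, pow_succ, ih]; group

/-- Powers of a cyclically reduced word. -/
lemma pow_word (w : Word G) (hne : w.toList ≠ [])
    (hcyc : w.toList.head?.map Sigma.fst ≠ w.toList.getLast?.map Sigma.fst) :
    ∀ k : ℕ, 1 ≤ k → ∃ v : Word G, v.prod = w.prod ^ k ∧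
      v.toList.length = k * w.toList.length ∧
      v.toList.head? = w.toList.head? ∧ v.toList.getLast? = w.toList.getLast? := by
  intro k
  induction k with
  | zero => omega
  | succ k ih =>
    intro _
    rcases Nat.eq_zero_or_pos k with rfl | hk
    · exact ⟨w, by simp, by simp, rfl, rfl⟩
    · obtain ⟨v, hv, hlen, hhead, hlast⟩ := ih hk
      have hwpos : 1 ≤ w.toList.length := List.length_pos_iff.mpr hne
      have hvne : v.toList ≠ [] := by
        intro h
        rw [h] at hlen
        have h2 : 0 < k * w.toList.length := Nat.mul_pos hk hwpos
        simp only [List.length_nil] at hlen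
        exact h2.ne' hlen.symm
      refine ⟨⟨w.toList ++ v.toList, ?_, ?_⟩, ?_, ?_, ?_, ?_⟩
      · intro p hp
        rcases List.mem_append.mp hp with h | h
        · exact w.ne_one p h
        · exact v.ne_one p h
      · rw [List.isChain_append]
        refine ⟨w.chain_ne, v.chain_ne, ?_⟩
        intro x hx y hy hxy
        rw [List.getLast?_eq_getLast (l := w.toList) hne, Option.mem_def,
          Option.some_inj] at hx
        rw [hhead, List.head?_eq_head (l := w.toList) hne, Option.mem_def,
          Option.some_inj] at hy
        apply hcyc
        rw [List.head?_eq_head (l := w.toList) hne,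
          List.getLast?_eq_getLast (l := w.toList) hne]
        simp only [Option.map_some]
        rw [hx, hy]
        exact congrArg some hxy.symm
      · show lprod _ = _
        rw [lprod_append, ← word_prod_eq, ← word_prod_eq, hv, pow_succ']
      · show (w.toList ++ v.toList).length = _
        rw [List.length_append, hlen]
        ring
      · show (w.toList ++ v.toList).head? = _
        rw [List.head?_append_of_ne_nil _ hne]
      · show (w.toList ++ v.toList).getLast? = _
        rw [List.getLast?_append_of_ne_nil _ hvne, hlast]

lemma rinv_concat (L : List (Σ i, G i)) (p : (Σ i, G i)) :
    rinv (L ++ [p]) = ⟨p.1, p.2⁻¹⟩ :: rinv L := by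
  simp [rinv]

lemma chain'_rinv (L : List (Σ i, G i)) (h : L.Chain' fun p q => p.1 ≠ q.1) :
    (rinv L).Chain' fun p q => p.1 ≠ q.1 := by
  unfold List.Chain' at h ⊢
  rw [rinv, List.isChain_reverse, List.isChain_map]
  exact List.IsChain.imp (fun a b hab => hab.symm) h

lemma mem_rinv {q : Σ i, G i} {L : List (Σ i, G i)} (h : q ∈ rinv L) :
    ∃ r ∈ L, q = ⟨r.1, r.2⁻¹⟩ := by
  rw [rinv, List.mem_reverse, List.mem_map] at h
  obtain ⟨r, hr, rfl⟩ := h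
  exact ⟨r, hr, rfl⟩

/-- Conjugates of letters: either the conjugator lies in the factor, or the
conjugate has an explicit reduced word of length `≥ 3` whose first and last
indices agree. -/
lemma conj_core :
    ∀ (L : List (Σ i, G i)), (∀ p ∈ L, p.2 ≠ 1) →
      L.Chain' (fun p q => p.1 ≠ q.1) →
      ∀ (i : ι) (z : G i), z ≠ 1 →
      (lprod L ∈ (of : G i →* CoprodI G).range) ∨
      (∃ v : Word G, v.prod = lprod L * of z * (lprod L)⁻¹ ∧ 3 ≤ v.toList.length ∧
        v.toList.head?.map Sigma.fst = v.toList.getLast?.map Sigma.fst) := by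
  intro L
  induction L using List.reverseRecOn with
  | nil => intro _ _ i z hz; left; exact ⟨1, by simp [lprod_nil]⟩
  | append_singleton L' p ih =>
    intro h1 h2 i z hz
    obtain ⟨l, a⟩ := p
    have ha : a ≠ 1 := h1 ⟨l, a⟩ (by simp)
    have h1' : ∀ q ∈ L', q.2 ≠ 1 := fun q hq => h1 q (by simp [hq])
    have hMchain := h2
    unfold List.Chain' at h2
    rw [List.isChain_append] at h2
    obtain ⟨h2', -, hbd⟩ := h2
    by_cases hli : l = i
    · subst hli
      have hz' : a * z * a⁻¹ ≠ 1 := by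
        intro h
        apply hz
        have hzz : z = a⁻¹ * (a * z * a⁻¹) * a := by group
        rw [hzz, h]; group
      rcases ih h1' h2' l (a * z * a⁻¹) hz' with hL | ⟨v, hv, hlen, hfl⟩
      · left
        obtain ⟨c, hc⟩ := hL
        exact ⟨c * a, by rw [map_mul, hc, lprod_append, lprod_singleton]⟩
      · right
        refine ⟨v, ?_, hlen, hfl⟩
        rw [hv, lprod_append, lprod_singleton]
        simp [map_mul, map_inv, mul_assoc, mul_inv_rev]
    · right
      set M : List (Σ i, G i) := L' ++ [⟨l, a⟩] with hMdef
      have hMne : M ≠ [] := by simp [hMdef]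
      have hrinvne : rinv M ≠ [] := by
        rw [hMdef, rinv_concat]
        simp
      refine ⟨⟨M ++ ⟨i, z⟩ :: rinv M, ?_, ?_⟩, ?_, ?_, ?_⟩
      · intro q hq
        rcases List.mem_append.mp hq with h | h
        · exact h1 q h
        · rcases List.mem_cons.mp h with rfl | h
          · exact hz
          · obtain ⟨r, hr, rfl⟩ := mem_rinv h
            exact inv_ne_one.mpr (h1 r hr)
      · rw [List.isChain_append]
        refine ⟨hMchain, ?_, ?_⟩
        · rw [List.isChain_cons]
          refine ⟨?_, chain'_rinv M hMchain⟩
          intro y hy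
          rw [hMdef, rinv_concat] at hy
          simp only [List.head?_cons, Option.mem_def, Option.some_inj] at hy
          rw [← hy]
          exact fun h => hli h.symm
        · intro x hx y hy
          rw [hMdef, List.getLast?_concat, Option.mem_def, Option.some_inj] at hx
          simp only [List.head?_cons, Option.mem_def, Option.some_inj] at hy
          rw [← hx, ← hy]
          exact hli
      · show lprod _ = _
        rw [lprod_append, lprod_cons, lprod_rinv, ← mul_assoc]
      · show (M ++ ⟨i, z⟩ :: rinv M).length ≥ 3
        have : (rinv M).length = M.length := by simp [rinv]
        have hM1 : 1 ≤ M.length := List.length_pos_iff.mpr hMne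
        simp only [List.length_append, List.length_cons, this]
        omega
      · show ((M ++ ⟨i, z⟩ :: rinv M).head?.map Sigma.fst) = _
        have e1 : (M ++ ⟨i, z⟩ :: rinv M).head? = M.head? :=
          List.head?_append_of_ne_nil _ hMne
        have e2 : (M ++ ⟨i, z⟩ :: rinv M).getLast? = (rinv M).getLast? := by
          rw [List.getLast?_append_of_ne_nil _ (by simp),
            show (⟨i, z⟩ :: rinv M : List (Σ i, G i)) = [⟨i, z⟩] ++ rinv M from rfl,
            List.getLast?_append_of_ne_nil _ hrinvne]
        have e3 : (rinv M).getLast? = M.head?.map (fun p => (⟨p.1, p.2⁻¹⟩ : Σ i, G i)) := by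
          rw [rinv, List.getLast?_reverse, List.head?_map]
        rw [e1, e2, e3]
        cases M.head? <;> simp

/-- Every nontrivial element is a conjugate of an element that is either a single
letter or cyclically reduced of length at least two. -/
lemma decomp :
    ∀ (n : ℕ) (w : Word G), w.toList.length ≤ n → w.toList ≠ [] →
      ∃ (u : CoprodI G) (v : Word G), w.prod = u * v.prod * u⁻¹ ∧
        (v.toList.length = 1 ∨ (2 ≤ v.toList.length ∧
          v.toList.head?.map Sigma.fst ≠ v.toList.getLast?.map Sigma.fst)) := by
  intro n
  induction n with
  | zero => intro w h hne; exact absurd (List.length_eq_zero_iff.mp (Nat.le_zero.mp h)) hne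
  | succ n ih =>
    intro w hlen hne
    rcases Nat.lt_or_ge w.toList.length 2 with h2 | h2
    · refine ⟨1, w, by simp, Or.inl ?_⟩
      have := List.length_pos_iff.mpr hne
      omega
    by_cases hcyc : w.toList.head?.map Sigma.fst ≠ w.toList.getLast?.map Sigma.fst
    · exact ⟨1, w, by simp, Or.inr ⟨h2, hcyc⟩⟩
    push_neg at hcyc
    obtain ⟨p, L₁, hw⟩ := List.exists_cons_of_ne_nil hne
    rcases L₁.eq_nil_or_concat with rfl | ⟨L₂, q, rfl⟩
    · rw [hw] at h2; simp at h2
    rw [List.concat_eq_append] at hw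
    obtain ⟨i, a⟩ := p
    obtain ⟨j, b⟩ := q
    have hw' : w.toList = (⟨i, a⟩ :: L₂) ++ [⟨j, b⟩] := by rw [hw]; simp
    have hij : i = j := by
      rw [hw'] at hcyc
      rw [List.getLast?_concat] at hcyc
      simp only [List.cons_append, List.head?_cons, Option.map_some] at hcyc
      exact Option.some_inj.mp hcyc
    subst hij
    have hch := w.chain_ne
    rw [hw, List.isChain_cons] at hch
    obtain ⟨hhead, htail⟩ := hch
    have htail' := htail
    rw [List.isChain_append] at htail'
    obtain ⟨hL₂, -, hbd⟩ := htail'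
    have hL₂ne : L₂ ≠ [] := by
      rintro rfl
      exact hhead ⟨i, b⟩ (by simp) rfl
    have hmem : ∀ q ∈ L₂, q.2 ≠ (1 : G q.1) := by
      intro q hq
      exact w.ne_one q (by rw [hw]; simp [hq])
    have hprodw : w.prod = of a * (lprod L₂ * of b) := by
      rw [word_prod_eq, hw, lprod_cons, lprod_append, lprod_singleton]
    have hlast : ∀ x ∈ L₂.getLast?, x.1 ≠ i := by
      intro x hx
      exact hbd x hx ⟨i, b⟩ (by simp)
    by_cases hba : b * a = 1
    · -- the first and last letters cancel completely
      have hL₂len : L₂.length ≤ n := by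
        rw [hw] at hlen
        simp only [List.length_cons, List.length_append, List.length_singleton] at hlen
        omega
      obtain ⟨u', v, hval, hcond⟩ := ih ⟨L₂, hmem, hL₂⟩ hL₂len hL₂ne
      refine ⟨of a * u', v, ?_, hcond⟩
      have : (⟨L₂, hmem, hL₂⟩ : Word G).prod = lprod L₂ := rfl
      rw [this] at hval
      have hlp : lprod L₂ = (of a)⁻¹ * w.prod * of a := by
        rw [hprodw]
        have : (of b : CoprodI G) * of a = 1 := by
          rw [← map_mul, hba, map_one]
        group
        rw [mul_assoc, this, mul_one]
      refine ?_
      have hfin : w.prod = of a * (u' * v.prod * u'⁻¹) * (of a)⁻¹ := by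
        rw [← hval, hlp]; group
      rw [hfin]; group
    · -- the first and last letters merge into one letter
      have hchain₃ : List.IsChain (fun (p q : Σ i, G i) => p.1 ≠ q.1) (L₂ ++ [⟨i, b * a⟩]) := by
        rw [List.isChain_append]
        refine ⟨hL₂, List.isChain_singleton _, ?_⟩
        intro x hx y hy
        simp only [List.head?_cons, Option.mem_def, Option.some_inj] at hy
        rw [← hy]
        exact hlast x hx
      have hmem₃ : ∀ q ∈ L₂ ++ [⟨i, b * a⟩], q.2 ≠ (1 : G q.1) := by
        intro q hq
        rcases List.mem_append.mp hq with h | h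
        · exact hmem q h
        · rcases List.mem_singleton.mp h with rfl
          exact hba
      have hlen₃ : List.length (L₂ ++ [(⟨i, b * a⟩ : Σ i, G i)]) ≤ n := by
        rw [hw] at hlen
        simp only [List.length_append, List.length_cons, List.length_singleton] at hlen ⊢
        omega
      obtain ⟨u', v, hval, hcond⟩ := ih ⟨L₂ ++ [⟨i, b * a⟩], hmem₃, hchain₃⟩ hlen₃ (by simp)
      refine ⟨of a * u', v, ?_, hcond⟩
      have hval' : lprod (L₂ ++ [⟨i, b * a⟩]) = u' * v.prod * u'⁻¹ := hval
      have hlp : lprod (L₂ ++ [⟨i, b * a⟩]) = (of a)⁻¹ * w.prod * of a := by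
        rw [lprod_append, lprod_singleton, hprodw, map_mul]
        group
      have hfin : w.prod = of a * (u' * v.prod * u'⁻¹) * (of a)⁻¹ := by
        rw [← hval', hlp]; group
      rw [hfin]; group

theorem key {ι : Type*} {G : ι → Type*} [∀ i, Group (G i)]
    (htf : ∀ i, Monoid.IsTorsionFree (G i)) (g : CoprodI G) (hg : g ≠ 1)
    (k : ℕ) (hk : 0 < k) (i₀ : ι)
    (hgk : g ^ k ∈ (of : G i₀ →* CoprodI G).range) :
    g ∈ (of : G i₀ →* CoprodI G).range := by
  classical
  have hwg : (Word.equiv g).prod = g := (Word.equiv (M := G)).symm_apply_apply g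
  have hwgne : (Word.equiv g).toList ≠ [] := by
    intro h
    apply hg
    rw [← hwg, word_prod_eq, h, lprod_nil]
  obtain ⟨u, v, hdec, hcond⟩ := decomp (Word.equiv g).toList.length (Word.equiv g) le_rfl hwgne
  rw [hwg] at hdec
  obtain ⟨y, hy⟩ := hgk
  have hpk : g ^ k = u * v.prod ^ k * u⁻¹ := by rw [hdec, conj_pow_aux]
  rcases hcond with h1 | ⟨h2, hcyc⟩
  · -- `v` is a single letter
    obtain ⟨p, hp⟩ := List.length_eq_one_iff.mp h1
    obtain ⟨j, x⟩ := p
    have hx : x ≠ 1 := v.ne_one ⟨j, x⟩ (by rw [hp]; simp)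
    have hvprod : v.prod = of x := by rw [word_prod_eq, hp, lprod_singleton]
    have hxk : x ^ k ≠ 1 := by
      intro h
      exact htf j x hx (isOfFinOrder_iff_pow_eq_one.mpr ⟨k, hk, h⟩)
    have hu : lprod (Word.equiv u).toList = u := (Word.equiv (M := G)).symm_apply_apply u
    rcases conj_core (Word.equiv u).toList (Word.equiv u).ne_one (Word.equiv u).chain_ne
        j (x ^ k) hxk with ⟨c, hc⟩ | ⟨vv, hvv, hlen3, -⟩
    · rw [hu] at hc
      have hgk' : (of (c * x ^ k * c⁻¹) : CoprodI G) = of y := by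
        rw [hy, hpk, hvprod, ← map_pow, ← hc]
        simp [map_mul, map_inv, mul_assoc]
      have hc1 : c * x ^ k * c⁻¹ ≠ 1 := by
        intro h
        apply hxk
        have hcan : x ^ k = c⁻¹ * (c * x ^ k * c⁻¹) * c := by group
        rw [hcan, h]; group
      have hji : j = i₀ := index_eq_of_of_eq hc1 hgk'
      subst hji
      exact ⟨c * x * c⁻¹, by rw [hdec, hvprod, ← hc]; simp [map_mul, map_inv, mul_assoc]⟩
    · rw [hu] at hvv
      have hvvy : vv.prod = of y := by
        rw [hvv, map_pow, ← hvprod, ← hpk, ← hy]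
      exfalso
      by_cases hy1 : y = 1
      · rw [hy1, map_one] at hvvy
        have he := word_of_prod_one vv hvvy
        rw [he] at hlen3; simp [Word.empty] at hlen3
      · have he := word_of_prod_of hy1 vv hvvy
        rw [he] at hlen3; simp [single] at hlen3
  · -- `v` is cyclically reduced of length at least 2
    have hvne : v.toList ≠ [] := by intro h; rw [h] at h2; simp at h2
    obtain ⟨P, hP, hPlen, hPhead, hPlast⟩ := pow_word v hvne hcyc k hk
    have hPlen2 : 2 ≤ P.toList.length := by
      rw [hPlen]
      calc 2 ≤ v.toList.length := h2
      _ = 1 * v.toList.length := (one_mul _).symm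
      _ ≤ k * v.toList.length := Nat.mul_le_mul_right _ hk
    exfalso
    by_cases hy1 : y = 1
    · have hvk : v.prod ^ k = 1 := by
        have h0 : u * v.prod ^ k * u⁻¹ = 1 := by rw [← hpk, ← hy, hy1, map_one]
        have h3 := congrArg (fun t => u⁻¹ * t * u) h0
        simpa [mul_assoc] using h3
      rw [← hP] at hvk
      have he := word_of_prod_one P hvk
      rw [he] at hPlen2; simp [Word.empty] at hPlen2
    · have hPy : P.prod = u⁻¹ * of y * (u⁻¹)⁻¹ := by
        rw [hP, inv_inv]
        have h0 : (of y : CoprodI G) = u * v.prod ^ k * u⁻¹ := by rw [hy, hpk]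
        rw [h0]; group
      have hu : lprod (Word.equiv u⁻¹).toList = u⁻¹ :=
        (Word.equiv (M := G)).symm_apply_apply u⁻¹
      rcases conj_core (Word.equiv u⁻¹).toList (Word.equiv u⁻¹).ne_one
          (Word.equiv u⁻¹).chain_ne i₀ y hy1 with ⟨c, hc⟩ | ⟨vv, hvv, -, hveq⟩
      · rw [hu] at hc
        have hPof : P.prod = of (c * y * c⁻¹) := by
          rw [hPy, ← hc]; simp [map_mul, map_inv, mul_assoc]
        have hc1 : c * y * c⁻¹ ≠ 1 := by
          intro h
          apply hy1
          have hcan : y = c⁻¹ * (c * y * c⁻¹) * c := by group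
          rw [hcan, h]; group
        have he := word_of_prod_of hc1 P hPof
        rw [he] at hPlen2; simp [single] at hPlen2
      · rw [hu] at hvv
        have he : vv = P := word_prod_injective (by rw [hvv, hPy])
        rw [he, hPhead, hPlast] at hveq
        exact hcyc hveq

section Transfer

open Monoid

universe u v

variable (G₁ : Type u) (G₂ : Type v) [Group G₁] [Group G₂]

/-- The two factors, lifted to a common universe, as a family over `Bool`. -/
def fam : Bool → Type (max u v)
  | false => ULift.{v} G₁
  | true => ULift.{u} G₂

instance famGroup : ∀ b, Group (fam G₁ G₂ b)
  | false => inferInstanceAs (Group (ULift G₁))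
  | true => inferInstanceAs (Group (ULift G₂))

/-- From the binary coproduct to the indexed one. -/
def toI : G₁ ∗ G₂ →* CoprodI (fam G₁ G₂) :=
  Coprod.lift
    ((CoprodI.of (M := fam G₁ G₂) (i := false)).comp
      (MulEquiv.ulift (α := G₁)).symm.toMonoidHom)
    ((CoprodI.of (M := fam G₁ G₂) (i := true)).comp
      (MulEquiv.ulift (α := G₂)).symm.toMonoidHom)

/-- From the indexed coproduct to the binary one. -/
def ofI : CoprodI (fam G₁ G₂) →* G₁ ∗ G₂ :=
  CoprodI.lift fun b => match b with
    | false => Coprod.inl.comp (MulEquiv.ulift (α := G₁)).toMonoidHom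
    | true => Coprod.inr.comp (MulEquiv.ulift (α := G₂)).toMonoidHom

lemma ofI_toI (g : G₁ ∗ G₂) : ofI G₁ G₂ (toI G₁ G₂ g) = g := by
  have h : (ofI G₁ G₂).comp (toI G₁ G₂) = MonoidHom.id (G₁ ∗ G₂) := by
    apply Coprod.hom_ext
    · ext x
      simp [toI, ofI, MulEquiv.apply_symm_apply]
      exact congrArg Coprod.inl (MulEquiv.apply_symm_apply (MulEquiv.ulift : ULift.{v} G₁ ≃* G₁) x)
    · ext x
      simp [toI, ofI, MulEquiv.apply_symm_apply]
      exact congrArg Coprod.inr (MulEquiv.apply_symm_apply (MulEquiv.ulift : ULift.{u} G₂ ≃* G₂) x)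
  exact DFunLike.congr_fun h g

lemma mem_range_iff (g : G₁ ∗ G₂) :
    g ∈ (Coprod.inl : G₁ →* G₁ ∗ G₂).range ↔
      toI G₁ G₂ g ∈ (CoprodI.of : fam G₁ G₂ false →* CoprodI (fam G₁ G₂)).range := by
  constructor
  · rintro ⟨x, rfl⟩
    exact ⟨(MulEquiv.ulift (α := G₁)).symm x, by simp [toI]; rfl⟩
  · rintro ⟨x, hx⟩
    refine ⟨(MulEquiv.ulift (α := G₁)) x, ?_⟩
    rw [← ofI_toI G₁ G₂ g, ← hx]
    simp only [ofI, CoprodI.lift_of]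
    rfl

lemma fam_tf (h₁ : Monoid.IsTorsionFree G₁) (h₂ : Monoid.IsTorsionFree G₂) :
    ∀ b, Monoid.IsTorsionFree (fam G₁ G₂ b) := by
  intro b
  cases b
  · intro x hx hfin
    obtain ⟨n, hn, h⟩ := isOfFinOrder_iff_pow_eq_one.mp hfin
    refine h₁ x.down ?_ (isOfFinOrder_iff_pow_eq_one.mpr ⟨n, hn, ?_⟩)
    · intro hd
      exact hx (ULift.ext x 1 hd)
    · have := congrArg (MulEquiv.ulift (α := G₁)) h
      exact this
  · intro x hx hfin
    obtain ⟨n, hn, h⟩ := isOfFinOrder_iff_pow_eq_one.mp hfin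
    refine h₂ x.down ?_ (isOfFinOrder_iff_pow_eq_one.mpr ⟨n, hn, ?_⟩)
    · intro hd
      exact hx (ULift.ext x 1 hd)
    · have := congrArg (MulEquiv.ulift (α := G₂)) h
      exact this

end Transfer

end FPAux

open scoped Monoid.Coprod

/-- If `G₁` and `G₂` are torsion-free groups, `g` a nontrivial element of the free
product `G₁ ∗ G₂`, and `g ^ k` lies in the canonical copy of `G₁` for some `k > 0`,
then `g` lies in `G₁`. -/
theorem stmt_0 {G₁ G₂ : Type*} [Group G₁] [Group G₂]
    (h₁ : Monoid.IsTorsionFree G₁) (h₂ : Monoid.IsTorsionFree G₂)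
    (g : G₁ ∗ G₂) (hg : g ≠ 1) (k : ℕ) (hk : 0 < k)
    (hgk : g ^ k ∈ (Monoid.Coprod.inl : G₁ →* G₁ ∗ G₂).range) :
    g ∈ (Monoid.Coprod.inl : G₁ →* G₁ ∗ G₂).range := by
  have htf := FPAux.fam_tf G₁ G₂ h₁ h₂
  have hg' : FPAux.toI G₁ G₂ g ≠ 1 := fun h =>
    hg (by rw [← FPAux.ofI_toI G₁ G₂ g, h, map_one])
  have hgk' : (FPAux.toI G₁ G₂ g) ^ k ∈
      (Monoid.CoprodI.of : FPAux.fam G₁ G₂ false →* _).range := by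
    rw [← map_pow]
    exact (FPAux.mem_range_iff G₁ G₂ (g ^ k)).mp hgk
  exact (FPAux.mem_range_iff G₁ G₂ g).mpr
    (FPAux.key htf (FPAux.toI G₁ G₂ g) hg' k hk false hgk')
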